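/- Every connected paw-minor-free graph is either a cycle (connected and 2-regular) or a tree (connected and acyclic). -/

import Mathlib

open SimpleGraph

variable {α β : Type*}

/-- A model of `H` in `G`: a family of pairwise disjoint nonempty vertex subsets of `G`,
each inducing a connected subgraph, such that for every edge `h h'` of `H` there is an
edge of `G` between `V h` and `V h'`. -/
def IsMinorModel (G : SimpleGraph α) (H : SimpleGraph β) (V : β → Set α) : Prop :=
  (∀ h, (V h).Nonempty) ∧
  (Pairwise fun h h' => Disjoint (V h) (V h')) ∧
  (∀ h, (G.induce (V h)).Connected) ∧
  ∀ h h', H.Adj h h' → ∃ x ∈ V h, ∃ y ∈ V h', G.Adj x y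

/-- `H` is a minor of `G`. -/
def HasMinor (G : SimpleGraph α) (H : SimpleGraph β) : Prop :=
  ∃ V : β → Set α, IsMinorModel G H V

/-- `G` is `H`-minimal: `H` is a minor of `G`, but for every vertex `x` of `G`,
`H` is not a minor of `G − x`. -/
def MinorMinimal (G : SimpleGraph α) (H : SimpleGraph β) : Prop :=
  HasMinor G H ∧ ∀ x : α, ¬ HasMinor (G.induce {y | y ≠ x}) H

/-- A graph is 2-connected if it has at least 3 vertices, is connected, and stays
connected after deleting any single vertex. -/
def TwoConnected [Fintype α] (G : SimpleGraph α) : Prop :=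
  3 ≤ Fintype.card α ∧ G.Connected ∧ ∀ v : α, (G.induce {w | w ≠ v}).Connected

/-- `G` is a cycle: connected and 2-regular. -/
def IsCycleGraph (G : SimpleGraph α) : Prop :=
  G.Connected ∧ ∀ v : α, (G.neighborSet v).ncard = 2

/-- The paw: a triangle `0,1,2` together with one additional vertex `3` adjacent to
exactly one vertex of the triangle. -/
def pawGraph : SimpleGraph (Fin 4) :=
  fromEdgeSet {s(0, 1), s(0, 2), s(1, 2), s(2, 3)}

section Helpers

variable {G : SimpleGraph α}

private lemma end_mem_support_tail {v : α} (p : G.Walk v v) (h : ¬p.Nil) :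
    v ∈ p.support.tail := by
  obtain ⟨u, ha, q, rfl⟩ := Walk.not_nil_iff.mp h
  simp

private lemma mem_support_iff_tail {v : α} (p : G.Walk v v) (h : ¬p.Nil) {x : α} :
    x ∈ p.support ↔ x ∈ p.support.tail := by
  constructor
  · intro hx
    rw [p.support_eq_cons] at hx
    rcases List.mem_cons.mp hx with rfl | hx
    · exact end_mem_support_tail p h
    · exact hx
  · intro hx
    rw [p.support_eq_cons]
    exact List.mem_cons_of_mem _ hx

private lemma mem_rotate_support [DecidableEq α] {v w : α} {c : G.Walk v v} (hc : ¬c.Nil)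
    (hw : w ∈ c.support)
    (hrot : ¬(c.rotate w hw).Nil) {x : α} : x ∈ (c.rotate w hw).support ↔ x ∈ c.support := by
  rw [mem_support_iff_tail _ hrot, mem_support_iff_tail _ hc]
  exact (Walk.support_rotate c w hw).mem_iff

private lemma induce_singleton_connected (G : SimpleGraph α) (x : α) :
    (G.induce {x}).Connected := by
  have h := (Subgraph.singletonSubgraph_connected (G := G) (v := x)).induce_verts
  simpa using h

private lemma interior_exists {a z : α} (q : G.Walk a z) (hpath : q.IsPath)
    (h2 : ¬ q.tail.Nil) :
    ∃ T : Set α, T.Nonempty ∧ (G.induce T).Connected ∧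
      (∀ t ∈ T, t ∈ q.support ∧ t ≠ a ∧ t ≠ z) ∧
      (∃ t ∈ T, G.Adj a t) ∧ (∃ t ∈ T, G.Adj t z) := by
  have hq : ¬ q.Nil := by
    intro hn
    cases q with
    | nil => exact h2 .nil
    | cons h p => simp at hn
  obtain ⟨b, hab, q2, rfl⟩ := Walk.not_nil_iff.mp hq
  have hq2 : ¬ q2.Nil := by
    rw [Walk.tail_cons] at h2
    simpa using h2
  obtain ⟨hq2path, haq2⟩ := (Walk.cons_isPath_iff hab q2).mp hpath
  have hs : ¬ q2.reverse.Nil := by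
    rw [Walk.not_nil_iff_lt_length, Walk.length_reverse]
    rwa [Walk.not_nil_iff_lt_length] at hq2
  obtain ⟨c3, hzc3, r', hr⟩ := Walk.not_nil_iff.mp hs
  refine ⟨{t | t ∈ r'.support}, ⟨c3, r'.start_mem_support⟩, r'.connected_induce_support, ?_, ?_, ?_⟩
  · intro t ht
    have htq2 : t ∈ q2.support := by
      have h' : t ∈ q2.reverse.support := by
        rw [hr, Walk.support_cons]; exact List.mem_cons_of_mem _ ht
      rwa [Walk.support_reverse, List.mem_reverse] at h'
    refine ⟨by rw [Walk.support_cons]; exact List.mem_cons_of_mem _ htq2, ?_, ?_⟩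
    · rintro rfl; exact haq2 htq2
    · rintro rfl
      have hrp : q2.reverse.IsPath := hq2path.reverse
      rw [hr, Walk.cons_isPath_iff] at hrp
      exact hrp.2 ht
  · exact ⟨b, r'.end_mem_support, hab⟩
  · exact ⟨c3, r'.start_mem_support, hzc3.symm⟩

private lemma paw_hasMinor {G : SimpleGraph α} (W : Fin 4 → Set α)
    (hne : ∀ i, (W i).Nonempty)
    (hdisj : Pairwise fun i j => Disjoint (W i) (W j))
    (hc : ∀ i, (G.induce (W i)).Connected)
    (e01 : ∃ x ∈ W 0, ∃ y ∈ W 1, G.Adj x y)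
    (e02 : ∃ x ∈ W 0, ∃ y ∈ W 2, G.Adj x y)
    (e12 : ∃ x ∈ W 1, ∃ y ∈ W 2, G.Adj x y)
    (e23 : ∃ x ∈ W 2, ∃ y ∈ W 3, G.Adj x y) : HasMinor G pawGraph := by
  have sym : ∀ i j : Fin 4, (∃ x ∈ W i, ∃ y ∈ W j, G.Adj x y) →
      ∃ x ∈ W j, ∃ y ∈ W i, G.Adj x y := by
    rintro i j ⟨x, hx, y, hy, h⟩
    exact ⟨y, hy, x, hx, h.symm⟩
  refine ⟨W, hne, hdisj, hc, ?_⟩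
  intro h h' hadj
  rw [pawGraph, fromEdgeSet_adj] at hadj
  simp only [Set.mem_insert_iff, Set.mem_singleton_iff] at hadj
  fin_cases h <;> fin_cases h' <;>
    first
    | exact e01 | exact e02 | exact e12 | exact e23
    | exact sym _ _ e01 | exact sym _ _ e02 | exact sym _ _ e12 | exact sym _ _ e23
    | (exfalso; revert hadj; decide)

end Helpers

/-- Every connected paw-minor-free graph is either a cycle (connected and 2-regular)
or a tree (connected and acyclic). -/
theorem connected_paw_minor_free (G : SimpleGraph α) [Fintype α]
    (hconn : G.Connected) (hfree : ¬ HasMinor G pawGraph) :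
    IsCycleGraph G ∨ G.IsTree := by
  classical
  by_cases hac : G.IsAcyclic
  · exact Or.inr ⟨hconn, hac⟩
  left
  simp only [IsAcyclic, not_forall, not_not] at hac
  obtain ⟨v, p, hp⟩ := hac
  have hpnn : ¬ p.Nil := hp.not_nil
  -- Step 1: the cycle is spanning
  have hspan : ∀ x, x ∈ p.support := by
    by_contra hsp
    push_neg at hsp
    obtain ⟨a, ha⟩ := hsp
    obtain ⟨q0⟩ := hconn.preconnected v a
    obtain ⟨d, -, hdfst, hdsnd⟩ :=
      q0.exists_boundary_dart {x | x ∈ p.support} p.start_mem_support ha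
    apply hfree
    have hadj : G.Adj d.fst d.snd := d.adj
    have hw : d.fst ∈ p.support := hdfst
    have hcyc : (p.rotate d.fst hw).IsCycle := hp.rotate hw
    have hcnn : ¬ (p.rotate d.fst hw).Nil := hcyc.not_nil
    have humem : d.snd ∉ (p.rotate d.fst hw).support := by
      rw [mem_rotate_support hpnn hw hcnn]; exact hdsnd
    have hwmem : d.fst ∈ (p.rotate d.fst hw).support := Walk.start_mem_support _
    obtain ⟨b, hwb, q, hq⟩ := Walk.not_nil_iff.mp hcnn
    have hcyc' : (Walk.cons hwb q).IsCycle := by rw [← hq]; exact hcyc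
    have hlen : 2 ≤ q.length := by
      have h3 := hcyc'.three_le_length
      rw [Walk.length_cons] at h3
      omega
    rw [Walk.cons_isCycle_iff] at hcyc'
    obtain ⟨hqpath, hqe⟩ := hcyc'
    have hqnn : ¬ q.Nil := by rw [Walk.not_nil_iff_lt_length]; omega
    have hqtail : ¬ q.tail.Nil := by
      rw [Walk.not_nil_iff_lt_length]
      have hlt := Walk.length_tail_add_one hqnn
      omega
    obtain ⟨T, hTne, hTconn, hTsub, hTa, hTz⟩ := interior_exists q hqpath hqtail
    have hbmem : b ∈ (p.rotate d.fst hw).support := by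
      rw [hq, Walk.support_cons]; exact List.mem_cons_of_mem _ q.start_mem_support
    have hTsub' : ∀ t ∈ T, t ∈ (p.rotate d.fst hw).support := by
      intro t ht
      rw [hq, Walk.support_cons]
      exact List.mem_cons_of_mem _ (hTsub t ht).1
    have hub : d.snd ≠ b := fun h => humem (by rw [h]; exact hbmem)
    have hbu : b ≠ d.snd := hub.symm
    have huw : d.snd ≠ d.fst := fun h => humem (by rw [h]; exact hwmem)
    have hwu : d.fst ≠ d.snd := huw.symm
    have huT : d.snd ∉ T := fun h => humem (hTsub' _ h)
    have hwT : d.fst ∉ T := fun h => (hTsub _ h).2.2 rfl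
    have hbT : b ∉ T := fun h => (hTsub _ h).2.1 rfl
    have hwb' : d.fst ≠ b := hwb.ne
    have hbw : b ≠ d.fst := hwb'.symm
    apply paw_hasMinor ![{b}, T, {d.fst}, {d.snd}]
    · intro i
      fin_cases i <;> simp [hTne]
    · intro i j hij
      fin_cases i <;> fin_cases j <;>
        simp_all [Set.disjoint_singleton_left, Set.disjoint_singleton_right]
    · intro i
      fin_cases i <;>
        first
          | exact induce_singleton_connected G _
          | exact hTconn
    · obtain ⟨t, ht, hbt⟩ := hTa
      exact ⟨b, rfl, t, ht, hbt⟩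
    · exact ⟨b, rfl, d.fst, rfl, hwb.symm⟩
    · obtain ⟨t, ht, htw⟩ := hTz
      exact ⟨t, ht, d.fst, rfl, htw⟩
    · exact ⟨d.fst, rfl, d.snd, rfl, hadj⟩
  -- Step 2: every edge of G is an edge of the cycle
  have hchord : ∀ x y : α, G.Adj x y → s(x, y) ∈ p.edges := by
    intro x y hxy
    by_contra hxyp
    apply hfree
    have hx : x ∈ p.support := hspan x
    have hcyc : (p.rotate x hx).IsCycle := hp.rotate hx
    have hcnn : ¬ (p.rotate x hx).Nil := hcyc.not_nil
    have hchordc : s(x, y) ∉ (p.rotate x hx).edges := fun h =>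
      hxyp ((p.rotate_edges x hx).mem_iff.mp h)
    have hy : y ∈ (p.rotate x hx).support := (mem_rotate_support hpnn hx hcnn).mpr (hspan y)
    obtain ⟨b, hxb, q, hq⟩ := Walk.not_nil_iff.mp hcnn
    have hcyc' : (Walk.cons hxb q).IsCycle := by rw [← hq]; exact hcyc
    rw [Walk.cons_isCycle_iff] at hcyc'
    obtain ⟨hqpath, hqe⟩ := hcyc'
    have hqedges : ∀ e ∈ q.edges, e ∈ (p.rotate x hx).edges := by
      intro e he; rw [hq, Walk.edges_cons]; exact List.mem_cons_of_mem _ he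
    have hby : b ≠ y := by
      rintro rfl
      exact hchordc (by rw [hq, Walk.edges_cons]; exact List.mem_cons_self)
    have hyb : y ≠ b := hby.symm
    have hyx : y ≠ x := hxy.ne'
    have hyq : y ∈ q.support := by
      rw [hq, Walk.support_cons] at hy
      rcases List.mem_cons.mp hy with h | h
      · exact absurd h hyx
      · exact h
    have hq2path : (q.dropUntil y hyq).IsPath := hqpath.dropUntil hyq
    have hq2nn : ¬ (q.dropUntil y hyq).Nil := Walk.not_nil_of_ne hyx
    obtain ⟨b4, hyb4, q4, hq4⟩ := Walk.not_nil_iff.mp hq2nn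
    have hq4nn : ¬ q4.Nil := by
      intro hn
      have hb4x : b4 = x := hn.eq
      apply hchordc
      have he1 : s(y, b4) ∈ (q.dropUntil y hyq).edges := by
        rw [hq4, Walk.edges_cons]; exact List.mem_cons_self
      have he2 : s(y, b4) ∈ q.edges := q.edges_dropUntil_subset hyq he1
      rw [hb4x] at he2
      rw [Sym2.eq_swap]
      exact hqedges _ he2
    have hq2tail : ¬ (q.dropUntil y hyq).tail.Nil := by
      rw [hq4, Walk.tail_cons]
      simpa using hq4nn
    obtain ⟨T, hTne, hTconn, hTsub, hTa, hTz⟩ := interior_exists _ hq2path hq2tail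
    have hsupp := congrArg Walk.support (q.take_spec hyq)
    rw [Walk.support_append] at hsupp
    have hnodup := hqpath.support_nodup
    rw [← hsupp, List.nodup_append] at hnodup
    have hbq2 : b ∉ (q.dropUntil y hyq).support.tail := fun h =>
      hnodup.2.2 _ (Walk.start_mem_support _) _ h rfl
    have hTsub2 : ∀ t ∈ T, t ∈ (q.dropUntil y hyq).support.tail := by
      intro t ht
      obtain ⟨h1, h2, h3⟩ := hTsub t ht
      rw [(q.dropUntil y hyq).support_eq_cons] at h1
      rcases List.mem_cons.mp h1 with rfl | h
      · exact absurd rfl h2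
      · exact h
    have hbT : b ∉ T := fun h => hbq2 (hTsub2 b h)
    have hxT : x ∉ T := fun h => (hTsub x h).2.2 rfl
    have hyT : y ∉ T := fun h => (hTsub y h).2.1 rfl
    have hxb' : x ≠ b := hxb.ne
    have hbx : b ≠ x := hxb'.symm
    have hxy' : x ≠ y := hxy.ne
    apply paw_hasMinor ![{y}, T, {x}, {b}]
    · intro i
      fin_cases i <;> simp [hTne]
    · intro i j hij
      fin_cases i <;> fin_cases j <;>
        simp_all [Set.disjoint_singleton_left, Set.disjoint_singleton_right]
    · intro i
      fin_cases i <;>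
        first
          | exact induce_singleton_connected G _
          | exact hTconn
    · obtain ⟨t, ht, hyt⟩ := hTa
      exact ⟨y, rfl, t, ht, hyt⟩
    · exact ⟨y, rfl, x, rfl, hxy.symm⟩
    · obtain ⟨t, ht, htx⟩ := hTz
      exact ⟨t, ht, x, rfl, htx⟩
    · exact ⟨x, rfl, b, rfl, hxb⟩
  -- Step 3: compute degrees
  refine ⟨hconn, fun w0 => ?_⟩
  have hw0 : w0 ∈ p.support := hspan w0
  have hcyc : (p.rotate w0 hw0).IsCycle := hp.rotate hw0
  have hcnn : ¬ (p.rotate w0 hw0).Nil := hcyc.not_nil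
  obtain ⟨b, hwb, q, hq⟩ := Walk.not_nil_iff.mp hcnn
  have hcyc' : (Walk.cons hwb q).IsCycle := by rw [← hq]; exact hcyc
  have hlen : 2 ≤ q.length := by
    have h3 := hcyc'.three_le_length
    rw [Walk.length_cons] at h3
    omega
  rw [Walk.cons_isCycle_iff] at hcyc'
  obtain ⟨hqpath, hqe⟩ := hcyc'
  have hqrev : q.reverse.IsPath := hqpath.reverse
  have hqrnn : ¬ q.reverse.Nil := by
    rw [Walk.not_nil_iff_lt_length, Walk.length_reverse]
    omega
  obtain ⟨d2, hwd, r'', hr⟩ := Walk.not_nil_iff.mp hqrnn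
  have hbd : b ≠ d2 := by
    rintro rfl
    apply hqe
    have h' : s(w0, b) ∈ q.reverse.edges := by
      rw [hr, Walk.edges_cons]; exact List.mem_cons_self
    rwa [Walk.edges_reverse, List.mem_reverse] at h'
  have hset : G.neighborSet w0 = {b, d2} := by
    ext z
    simp only [mem_neighborSet, Set.mem_insert_iff, Set.mem_singleton_iff]
    constructor
    · intro hz
      have he : s(w0, z) ∈ (p.rotate w0 hw0).edges :=
        (p.rotate_edges w0 hw0).mem_iff.mpr (hchord _ _ hz)
      rw [hq, Walk.edges_cons] at he
      rcases List.mem_cons.mp he with h | h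
      · left; exact Sym2.congr_right.mp h
      · right
        have h' : s(w0, z) ∈ q.reverse.edges := by
          rw [Walk.edges_reverse, List.mem_reverse]; exact h
        rw [hr, Walk.edges_cons] at h'
        rcases List.mem_cons.mp h' with h'' | h''
        · exact Sym2.congr_right.mp h''
        · exfalso
          have hmem : w0 ∈ r''.support := r''.fst_mem_support_of_mem_edges h''
          rw [hr, Walk.cons_isPath_iff] at hqrev
          exact hqrev.2 hmem
    · rintro (rfl | rfl)
      · exact hwb
      · exact hwd
  rw [hset, Set.ncard_pair hbd]
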